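/- Let f : ℕ → [0,∞) with f(0) > f(k) for all k ≥ 1, a > 0, and suppose there exist N ≥ 0 and c > 0 with c < f(0), f(N) ≠ c, and f(k) = c for all k > N. Let (y_k) solve the recurrence (R) for f, let q_k solve (R) for the sharp-peak landscape (f(0), c, c, …), and let C_j(f) = 1 + ∑_{h=1}^{j−1} ∑_{0=i_0<⋯<i_h<j} ∏_{t=1}^h binom(j−i_{t−1}, j−i_t) f(i_t)/(f(0)−f(i_t)). Then for all k > N: y_k = q_k + ∑_{j=1}^{N} (a^j/j!)·q_{k−j}·(f(j)/(f(0)−f(j)) − c/(f(0)−c))·C_j(f). -/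

import Mathlib

open Finset

/-- The coefficient `C_j(f) = 1 + ∑_{h=1}^{j-1} ∑_{0=i₀<i₁<⋯<i_h<j}
    ∏_{t=1}^h binom(j-i_{t-1}, j-i_t) f(i_t)/(f 0 - f(i_t))`, where a chain
    `0 = i₀ < i₁ < ⋯ < i_h < j` is encoded by the finset
    `S = {i₁, …, i_h} ⊆ (0, j)` (the empty chain contributing `1`). -/
noncomputable def Ccoef (f : ℕ → ℝ) (l : ℕ) : ℝ :=
  ∑ S ∈ (Finset.Ioo 0 l).powerset,
    (List.zipWith
      (fun p n => ((Nat.choose (l - p) (l - n) : ℕ) : ℝ) * (f n / (f 0 - f n)))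
      (0 :: S.sort (· ≤ ·)) (S.sort (· ≤ ·))).prod

private lemma choose_id_real (x yv z : ℕ) :
    (((x + yv + z).choose (yv + z) : ℕ) : ℝ) * ((yv + z).choose z : ℕ) =
      (((x + yv + z).choose z : ℕ) : ℝ) * ((x + yv).choose yv : ℕ) := by
  have h1 := Nat.add_choose_mul_factorial_mul_factorial x (yv + z)
  have h2 := Nat.add_choose_mul_factorial_mul_factorial yv z
  have h3 := Nat.add_choose_mul_factorial_mul_factorial (x + yv) z
  have h4 := Nat.add_choose_mul_factorial_mul_factorial x yv
  have e1 : x + (yv + z) = x + yv + z := by omega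
  rw [e1] at h1
  have e3 : x + yv + z = x + yv + z := rfl
  have c1 := congrArg (fun n : ℕ => (n : ℝ)) h1
  have c2 := congrArg (fun n : ℕ => (n : ℝ)) h2
  have c3 := congrArg (fun n : ℕ => (n : ℝ)) h3
  have c4 := congrArg (fun n : ℕ => (n : ℝ)) h4
  push_cast at c1 c2 c3 c4
  have hb : ((x.factorial : ℝ) * ((yv.factorial : ℝ) * (z.factorial : ℝ))) ≠ 0 := by
    positivity
  apply mul_right_cancel₀ hb
  linear_combination ((((x + yv + z).choose (yv + z) : ℕ) : ℝ) * (x.factorial : ℝ)) * c2 + c1 -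
    ((((x + yv + z).choose z : ℕ) : ℝ) * (z.factorial : ℝ)) * c4 - c3

private lemma chain_shift (f : ℕ → ℝ) :
    ∀ (L : List ℕ) (p j l : ℕ), p < j → j ≤ l →
    (p :: L).Pairwise (· < ·) → (∀ n ∈ L, n < j) →
    (List.zipWith
        (fun p n => ((Nat.choose (l - p) (l - n) : ℕ) : ℝ) * (f n / (f 0 - f n)))
        (p :: (L ++ [j])) (L ++ [j])).prod
      = (((l - p).choose (l - j) : ℕ) : ℝ) * (f j / (f 0 - f j)) *
        (List.zipWith
          (fun p n => ((Nat.choose (j - p) (j - n) : ℕ) : ℝ) * (f n / (f 0 - f n)))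
          (p :: L) L).prod := by
  intro L
  induction L with
  | nil =>
    intro p j l hpj hjl _ _
    simp
  | cons n T ih =>
    intro p j l hpj hjl hpair hlt
    rw [List.pairwise_cons] at hpair
    obtain ⟨hpall, hpair'⟩ := hpair
    have hpn : p < n := hpall n (by simp)
    have hnj : n < j := hlt n (by simp)
    have hTj : ∀ m ∈ T, m < j := fun m hm => hlt m (by simp [hm])
    have key : (((l - p).choose (l - n) : ℕ) : ℝ) * ((l - n).choose (l - j) : ℕ) =
        (((l - p).choose (l - j) : ℕ) : ℝ) * ((j - p).choose (j - n) : ℕ) := by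
      have e1 : l - p = (n - p) + (j - n) + (l - j) := by omega
      have e2 : l - n = (j - n) + (l - j) := by omega
      have e3 : j - p = (n - p) + (j - n) := by omega
      have e4 : j - n = j - n := rfl
      rw [e1, e2, e3]
      exact choose_id_real (n - p) (j - n) (l - j)
    have ihh := ih n j l hnj hjl hpair' hTj
    simp only [List.cons_append, List.zipWith_cons_cons, List.prod_cons] at *
    rw [ihh]
    set Z := (List.zipWith
          (fun p n => ((Nat.choose (j - p) (j - n) : ℕ) : ℝ) * (f n / (f 0 - f n)))
          (n :: T) T).prod
    linear_combination (f n / (f 0 - f n) * (f j / (f 0 - f j)) * Z) * key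

private lemma sort_insert_max {S : Finset ℕ} {j : ℕ} (h : ∀ x ∈ S, x < j) :
    (insert j S).sort (· ≤ ·) = S.sort (· ≤ ·) ++ [j] := by
  have hj : j ∉ S := fun hm => lt_irrefl j (h j hm)
  refine (fun h1 h2 => List.Perm.eq_of_pairwise' (Finset.pairwise_sort _ _) h2 h1) ?_ ?_
  · refine ((Finset.sort_perm_toList _ _).trans ((Finset.toList_insert hj).trans ?_)).trans
      (List.perm_append_singleton _ _).symm
    exact List.Perm.cons _ (Finset.sort_perm_toList _ _).symm
  · rw [List.pairwise_append]
    refine ⟨Finset.pairwise_sort _ _, by simp, ?_⟩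
    intro x hx y hy
    simp only [List.mem_singleton] at hy
    subst hy
    exact le_of_lt (h x ((Finset.mem_sort _).1 hx))

private lemma prod_insert_max (f : ℕ → ℝ) {S : Finset ℕ} {j l : ℕ}
    (hS : S ⊆ Finset.Ioo 0 j) (hj : 0 < j) (hjl : j ≤ l) :
    (List.zipWith
        (fun p n => ((Nat.choose (l - p) (l - n) : ℕ) : ℝ) * (f n / (f 0 - f n)))
        (0 :: (insert j S).sort (· ≤ ·)) ((insert j S).sort (· ≤ ·))).prod
      = ((l.choose (l - j) : ℕ) : ℝ) * (f j / (f 0 - f j)) *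
        (List.zipWith
          (fun p n => ((Nat.choose (j - p) (j - n) : ℕ) : ℝ) * (f n / (f 0 - f n)))
          (0 :: S.sort (· ≤ ·)) (S.sort (· ≤ ·))).prod := by
  have hlt : ∀ x ∈ S, x < j := fun x hx => (Finset.mem_Ioo.1 (hS hx)).2
  rw [sort_insert_max hlt]
  have hpair : (0 :: S.sort (· ≤ ·)).Pairwise (· < ·) := by
    rw [List.pairwise_cons]
    exact ⟨fun x hx => (Finset.mem_Ioo.1 (hS ((Finset.mem_sort _).1 hx))).1,
      (Finset.sortedLT_sort S).pairwise⟩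
  have h2 : ∀ n ∈ S.sort (· ≤ ·), n < j := fun n hn => hlt n ((Finset.mem_sort _).1 hn)
  have := chain_shift f (S.sort (· ≤ ·)) 0 j l hj hjl hpair h2
  simpa using this

private lemma Ccoef_rec (f : ℕ → ℝ) (l : ℕ) :
    Ccoef f l = 1 + ∑ j ∈ Finset.Ioo 0 l,
      ((l.choose (l - j) : ℕ) : ℝ) * (f j / (f 0 - f j)) * Ccoef f j := by
  rw [Ccoef]
  have h0 : (∅ : Finset ℕ) ∈ (Finset.Ioo 0 l).powerset := by simp
  rw [← Finset.add_sum_erase _ _ h0]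
  congr 1
  · simp
  · have : ∀ j ∈ Finset.Ioo 0 l,
        ((l.choose (l - j) : ℕ) : ℝ) * (f j / (f 0 - f j)) * Ccoef f j
        = ∑ S ∈ (Finset.Ioo 0 j).powerset,
            ((l.choose (l - j) : ℕ) : ℝ) * (f j / (f 0 - f j)) *
            (List.zipWith
              (fun p n => ((Nat.choose (j - p) (j - n) : ℕ) : ℝ) * (f n / (f 0 - f n)))
              (0 :: S.sort (· ≤ ·)) (S.sort (· ≤ ·))).prod := by
      intro j _
      rw [Ccoef, Finset.mul_sum]
    rw [Finset.sum_congr rfl this, Finset.sum_sigma']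
    refine Finset.sum_bij'
      (fun S hS => (⟨S.max' (Finset.nonempty_iff_ne_empty.2 (Finset.mem_erase.1 hS).1),
        S.erase (S.max' (Finset.nonempty_iff_ne_empty.2 (Finset.mem_erase.1 hS).1))⟩ :
          (_ : ℕ) × Finset ℕ))
      (fun p _ => insert p.1 p.2) ?_ ?_ ?_ ?_ ?_
    · intro S hS
      rw [Finset.mem_erase, Finset.mem_powerset] at hS
      have hne : S.Nonempty := Finset.nonempty_iff_ne_empty.2 hS.1
      simp only [Finset.mem_sigma, Finset.mem_powerset]
      constructor
      · exact hS.2 (S.max'_mem hne)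
      · intro x hx
        rw [Finset.mem_erase] at hx
        have hx1 := Finset.mem_Ioo.1 (hS.2 hx.2)
        have : x ≤ S.max' hne := S.le_max' x hx.2
        exact Finset.mem_Ioo.2 ⟨hx1.1, lt_of_le_of_ne this hx.1⟩
    · intro p hp
      rw [Finset.mem_sigma, Finset.mem_powerset] at hp
      obtain ⟨hp1, hp2⟩ := hp
      rw [Finset.mem_erase, Finset.mem_powerset]
      constructor
      · exact Finset.insert_ne_empty _ _
      · intro x hx
        rw [Finset.mem_insert] at hx
        rcases hx with rfl | hx
        · exact hp1
        · have := Finset.mem_Ioo.1 (hp2 hx)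
          have hl := Finset.mem_Ioo.1 hp1
          exact Finset.mem_Ioo.2 ⟨this.1, this.2.trans hl.2⟩
    · intro S hS
      exact Finset.insert_erase
        (S.max'_mem (Finset.nonempty_iff_ne_empty.2 (Finset.mem_erase.1 hS).1))
    · intro p hp
      rw [Finset.mem_sigma, Finset.mem_powerset] at hp
      obtain ⟨hp1, hp2⟩ := hp
      have hnot : p.1 ∉ p.2 := fun hm => lt_irrefl p.1 (Finset.mem_Ioo.1 (hp2 hm)).2
      have hmax : ∀ hne, (insert p.1 p.2).max' hne = p.1 := by
        intro hne
        refine le_antisymm ?_ (Finset.le_max' _ _ (Finset.mem_insert_self _ _))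
        refine Finset.max'_le _ _ _ ?_
        intro x hx
        rcases Finset.mem_insert.1 hx with rfl | hx
        · exact le_refl _
        · exact le_of_lt (Finset.mem_Ioo.1 (hp2 hx)).2
      obtain ⟨j0, S0⟩ := p
      simp only at hmax hnot ⊢
      rw [hmax, Finset.erase_insert hnot]
    · intro S hS
      rw [Finset.mem_erase, Finset.mem_powerset] at hS
      have hne : S.Nonempty := Finset.nonempty_iff_ne_empty.2 hS.1
      have hmem := Finset.mem_Ioo.1 (hS.2 (S.max'_mem hne))
      have hsub : S.erase (S.max' hne) ⊆ Finset.Ioo 0 (S.max' hne) := by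
        intro x hx
        rw [Finset.mem_erase] at hx
        have hx1 := Finset.mem_Ioo.1 (hS.2 hx.2)
        exact Finset.mem_Ioo.2 ⟨hx1.1, lt_of_le_of_ne (S.le_max' x hx.2) hx.1⟩
      have := prod_insert_max f hsub hmem.1 (le_of_lt hmem.2)
      rw [Finset.insert_erase (S.max'_mem hne)] at this
      simpa using this

private lemma y_formula (f : ℕ → ℝ) (hf : ∀ k, 1 ≤ k → f k < f 0) (a : ℝ)
    (y : ℕ → ℝ) (hy0 : y 0 = 1)
    (hy : ∀ k, 1 ≤ k →
      y k = (1 / (f 0 - f k)) *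
        ∑ j ∈ Finset.range k, y j * f j * a ^ (k - j) / (Nat.factorial (k - j))) :
    ∀ l, 1 ≤ l →
      y l = a ^ l / (Nat.factorial l) * (f 0 / (f 0 - f l)) * Ccoef f l := by
  intro l
  induction l using Nat.strong_induction_on with
  | _ l ih =>
    intro hl
    rw [hy l hl]
    have hrange : Finset.range l = insert 0 (Finset.Ioo 0 l) := by
      ext x; simp [Finset.mem_Ioo]; omega
    rw [hrange, Finset.sum_insert (by simp)]
    rw [hy0]
    have hterm : ∀ j ∈ Finset.Ioo 0 l,
        y j * f j * a ^ (l - j) / (Nat.factorial (l - j))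
        = (f 0 * a ^ l / (Nat.factorial l)) *
          (((l.choose (l - j) : ℕ) : ℝ) * (f j / (f 0 - f j)) * Ccoef f j) := by
      intro j hj
      rw [Finset.mem_Ioo] at hj
      rw [ih j hj.2 hj.1]
      have hne : f 0 - f j ≠ 0 := sub_ne_zero.2 (ne_of_gt (hf j hj.1))
      have hcast := Nat.cast_choose ℝ (show l - j ≤ l by omega)
      have e : l - (l - j) = j := by omega
      rw [e] at hcast
      rw [hcast]
      have hpow : a ^ j * a ^ (l - j) = a ^ l := by
        rw [← pow_add]; congr 1; omega
      have h1 : (Nat.factorial j : ℝ) ≠ 0 := Nat.cast_ne_zero.2 (Nat.factorial_ne_zero _)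
      have h2 : (Nat.factorial (l - j) : ℝ) ≠ 0 := Nat.cast_ne_zero.2 (Nat.factorial_ne_zero _)
      have h3 : (Nat.factorial l : ℝ) ≠ 0 := Nat.cast_ne_zero.2 (Nat.factorial_ne_zero _)
      field_simp
      rw [← hpow]
      ring
    rw [Finset.sum_congr rfl hterm, ← Finset.mul_sum]
    have hs : ∑ j ∈ Finset.Ioo 0 l,
        (((l.choose (l - j) : ℕ) : ℝ) * (f j / (f 0 - f j)) * Ccoef f j)
        = Ccoef f l - 1 := by
      rw [Ccoef_rec f l]; ring
    rw [hs]
    simp only [Nat.sub_zero]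
    ring

private lemma sum_swap_aux (F : ℕ → ℕ → ℝ) (k : ℕ) :
    ∑ j ∈ Finset.range k, ∑ i ∈ Finset.range (k - j), F j i
      = ∑ m ∈ Finset.range k, ∑ j ∈ Finset.range (m + 1), F j (m - j) := by
  rw [Finset.sum_sigma', Finset.sum_sigma']
  refine Finset.sum_bij' (fun p _ => (⟨p.1 + p.2, p.1⟩ : (_ : ℕ) × ℕ))
    (fun p _ => (⟨p.2, p.1 - p.2⟩ : (_ : ℕ) × ℕ)) ?_ ?_ ?_ ?_ ?_
  · intro p hp
    simp only [Finset.mem_sigma, Finset.mem_range] at hp ⊢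
    omega
  · intro p hp
    simp only [Finset.mem_sigma, Finset.mem_range] at hp ⊢
    omega
  · intro p hp
    obtain ⟨j, i⟩ := p
    simp only
    have : j + i - j = i := by omega
    rw [this]
  · intro p hp
    simp only [Finset.mem_sigma, Finset.mem_range] at hp
    obtain ⟨m, j⟩ := p
    simp only at hp ⊢
    have : j + (m - j) = m := by omega
    rw [this]
  · intro p hp
    obtain ⟨j, i⟩ := p
    simp only
    have : j + i - j = i := by omega
    rw [this]

private lemma conv_formula (f : ℕ → ℝ) (hf : ∀ k, 1 ≤ k → f k < f 0)
    (a : ℝ) (c : ℝ) (hc' : f 0 - c ≠ 0)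
    (y : ℕ → ℝ) (hy0 : y 0 = 1)
    (hy : ∀ k, 1 ≤ k →
      y k = (1 / (f 0 - f k)) *
        ∑ j ∈ Finset.range k, y j * f j * a ^ (k - j) / (Nat.factorial (k - j)))
    (q : ℕ → ℝ) (hq0 : q 0 = 1)
    (hq : ∀ k, 1 ≤ k →
      q k = (1 / (f 0 - c)) *
        ∑ j ∈ Finset.range k,
          q j * (if j = 0 then f 0 else c) * a ^ (k - j) / (Nat.factorial (k - j))) :
    ∀ k, ∑ j ∈ Finset.range (k + 1), (f j - c) * y j / (f 0 - c) * q (k - j) = y k := by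
  intro k
  induction k using Nat.strong_induction_on with
  | _ k ih =>
    rcases Nat.eq_zero_or_pos k with rfl | hk
    · simp [hy0, hq0]
      exact hc'
    · rw [Finset.sum_range_succ]
      have hq' : ∀ j ∈ Finset.range k,
          (f j - c) * y j / (f 0 - c) * q (k - j)
          = ∑ i ∈ Finset.range (k - j),
              (f j - c) * y j / (f 0 - c) *
                ((1 / (f 0 - c)) *
                  (q i * (if i = 0 then f 0 else c) * a ^ (k - j - i) /
                    (Nat.factorial (k - j - i)))) := by
        intro j hj
        rw [Finset.mem_range] at hj
        rw [hq (k - j) (by omega), Finset.mul_sum, Finset.mul_sum]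
      rw [Finset.sum_congr rfl hq', sum_swap_aux]
      have hinner : ∀ m ∈ Finset.range k,
          (∑ j ∈ Finset.range (m + 1),
            (f j - c) * y j / (f 0 - c) *
              ((1 / (f 0 - c)) *
                (q (m - j) * (if m - j = 0 then f 0 else c) * a ^ (k - j - (m - j)) /
                  (Nat.factorial (k - j - (m - j))))))
          = (1 / (f 0 - c)) * (y m * f m * a ^ (k - m) / (Nat.factorial (k - m))) := by
        intro m hm
        rw [Finset.mem_range] at hm
        have hee : ∀ j ∈ Finset.range (m + 1),
            (f j - c) * y j / (f 0 - c) *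
              ((1 / (f 0 - c)) *
                (q (m - j) * (if m - j = 0 then f 0 else c) * a ^ (k - j - (m - j)) /
                  (Nat.factorial (k - j - (m - j)))))
            = ((f j - c) * y j / (f 0 - c) * q (m - j) * (if m - j = 0 then f 0 else c)) *
                ((1 / (f 0 - c)) * (a ^ (k - m) / (Nat.factorial (k - m)))) := by
          intro j hj
          rw [Finset.mem_range] at hj
          have e : k - j - (m - j) = k - m := by omega
          rw [e]
          ring
        rw [Finset.sum_congr rfl hee, ← Finset.sum_mul]
        have hsum : ∑ j ∈ Finset.range (m + 1),
            (f j - c) * y j / (f 0 - c) * q (m - j) * (if m - j = 0 then f 0 else c)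
            = f m * y m := by
          rw [Finset.sum_range_succ]
          have hcc : ∀ j ∈ Finset.range m,
              (f j - c) * y j / (f 0 - c) * q (m - j) * (if m - j = 0 then f 0 else c)
              = ((f j - c) * y j / (f 0 - c) * q (m - j)) * c := by
            intro j hj
            rw [Finset.mem_range] at hj
            rw [if_neg (by omega)]
          rw [Finset.sum_congr rfl hcc, ← Finset.sum_mul]
          have h1 : ∑ j ∈ Finset.range m, (f j - c) * y j / (f 0 - c) * q (m - j)
              = y m - (f m - c) * y m / (f 0 - c) := by
            have h2 := ih m hm
            rw [Finset.sum_range_succ] at h2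
            simp only [Nat.sub_self, hq0] at h2
            linarith [h2]
          rw [h1]
          simp only [Nat.sub_self, if_pos rfl, hq0, ite_true]
          field_simp
          ring
        rw [hsum]
        ring
      rw [Finset.sum_congr rfl hinner, ← Finset.mul_sum]
      have hS : ∑ m ∈ Finset.range k, y m * f m * a ^ (k - m) / (Nat.factorial (k - m))
          = (f 0 - f k) * y k := by
        rw [hy k hk]
        have hfk : f 0 - f k ≠ 0 := sub_ne_zero.2 (ne_of_gt (hf k hk))
        field_simp
      rw [hS]
      simp only [Nat.sub_self, hq0]
      field_simp
      ring

theorem eventually_constant_landscape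
    (f : ℕ → ℝ) (hf0 : ∀ k, 0 ≤ f k) (hf : ∀ k, 1 ≤ k → f k < f 0)
    (a : ℝ) (ha : 0 < a)
    (N : ℕ) (c : ℝ) (hc : 0 < c) (hcf : c < f 0)
    (hN : f N ≠ c) (hconst : ∀ k, N < k → f k = c)
    (y : ℕ → ℝ) (hy0 : y 0 = 1)
    (hy : ∀ k, 1 ≤ k →
      y k = (1 / (f 0 - f k)) *
        ∑ j ∈ Finset.range k, y j * f j * a ^ (k - j) / (Nat.factorial (k - j)))
    (q : ℕ → ℝ) (hq0 : q 0 = 1)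
    (hq : ∀ k, 1 ≤ k →
      q k = (1 / (f 0 - c)) *
        ∑ j ∈ Finset.range k,
          q j * (if j = 0 then f 0 else c) * a ^ (k - j) / (Nat.factorial (k - j))) :
    ∀ k, N < k →
      y k = q k +
        ∑ j ∈ Finset.Icc 1 N,
          a ^ j / (Nat.factorial j) * q (k - j) *
            (f j / (f 0 - f j) - c / (f 0 - c)) * Ccoef f j := by
  intro k hNk
  have hfc : f 0 - c ≠ 0 := sub_ne_zero.2 (ne_of_gt hcf)
  have hconv := conv_formula f hf a c hfc y hy0 hy q hq0 hq k
  rw [← hconv]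
  have hrange : Finset.range (k + 1) = insert 0 (Finset.Icc 1 k) := by
    ext x; simp [Finset.mem_Icc]; omega
  rw [hrange, Finset.sum_insert (by simp)]
  congr 1
  · rw [hy0]
    simp only [Nat.sub_zero]
    field_simp
  · have hsub : Finset.Icc 1 N ⊆ Finset.Icc 1 k :=
      Finset.Icc_subset_Icc_right (le_of_lt hNk)
    have hzero : ∀ x ∈ Finset.Icc 1 k, x ∉ Finset.Icc 1 N →
        (f x - c) * y x / (f 0 - c) * q (k - x) = 0 := by
      intro x hx hx'
      rw [Finset.mem_Icc] at hx
      rw [Finset.mem_Icc] at hx'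
      have : f x = c := hconst x (by omega)
      rw [this]
      simp
    rw [← Finset.sum_subset hsub hzero]
    refine Finset.sum_congr rfl ?_
    intro j hj
    rw [Finset.mem_Icc] at hj
    rw [y_formula f hf a y hy0 hy j hj.1]
    have hne : f 0 - f j ≠ 0 := sub_ne_zero.2 (ne_of_gt (hf j hj.1))
    have h1 : (Nat.factorial j : ℝ) ≠ 0 := Nat.cast_ne_zero.2 (Nat.factorial_ne_zero _)
    field_simp
    ring
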